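/- For n ≥ 1, let Δⁿ = {x ∈ EuclideanSpace ℝ (Fin (n+1)) | ∀ i, 0 ≤ x i, and ∑ i, x i = 1} and let b ∈ Δⁿ be its barycenter, b i = 1/(n+1) for all i. Let ∂Δⁿ = {x ∈ Δⁿ | ∃ i, x i = 0} be the boundary of Δⁿ. Then the infimum distance from the barycenter to the boundary equals 1/√(n(n+1)): Metric.infDist b ∂Δⁿ = 1/√(n(n+1)). -/

import Mathlib

/-- For `n ≥ 1`, the distance in the Euclidean (ℓ²) metric from the
barycenter of the standard `n`-simplex to its boundary is `1/√(n(n+1))`. -/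
theorem infDist_barycenter_boundary_stdSimplex (n : ℕ) (hn : 1 ≤ n)
    (b : EuclideanSpace ℝ (Fin (n + 1))) (hb : ∀ i, b i = 1 / (n + 1)) :
    Metric.infDist b
      ({x : EuclideanSpace ℝ (Fin (n + 1)) |
          ((∀ i, 0 ≤ x i) ∧ ∑ i, x i = 1) ∧ ∃ i, x i = 0}) =
      1 / Real.sqrt (n * (n + 1)) := by
  have hN : (0:ℝ) < n := by exact_mod_cast Nat.lt_of_lt_of_le Nat.zero_lt_one hn
  set N : ℝ := (n : ℝ) with hNdef
  have hd : 1 / Real.sqrt (N * (N + 1)) = Real.sqrt (1 / (N * (N + 1))) := by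
    rw [one_div, one_div, Real.sqrt_inv]
  -- the candidate closest point: facet barycenter
  set x₀ : EuclideanSpace ℝ (Fin (n + 1)) :=
    (EuclideanSpace.equiv (Fin (n + 1)) ℝ).symm (fun i => if i = 0 then 0 else 1 / N) with hx₀
  have hx₀app : ∀ i, x₀ i = if i = 0 then 0 else 1 / N := fun i => rfl
  have hx₀sum : ∑ i, x₀ i = 1 := by
    simp only [hx₀app]
    rw [Fin.sum_univ_succ]
    simp [Fin.succ_ne_zero, Finset.sum_const, hN.ne', ← hNdef]
  have hx₀mem : x₀ ∈ {x : EuclideanSpace ℝ (Fin (n + 1)) |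
      ((∀ i, 0 ≤ x i) ∧ ∑ i, x i = 1) ∧ ∃ i, x i = 0} := by
    refine ⟨⟨fun i => ?_, hx₀sum⟩, ⟨0, by simp [hx₀app]⟩⟩
    rw [hx₀app]
    split <;> positivity
  apply le_antisymm
  · -- upper bound
    calc Metric.infDist b {x : EuclideanSpace ℝ (Fin (n + 1)) |
          ((∀ i, 0 ≤ x i) ∧ ∑ i, x i = 1) ∧ ∃ i, x i = 0} ≤ dist b x₀ :=
        Metric.infDist_le_dist_of_mem hx₀mem
      _ = 1 / Real.sqrt (N * (N + 1)) := by
        rw [hd, EuclideanSpace.dist_eq]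
        congr 1
        have : ∀ i, dist (b i) (x₀ i) ^ 2 =
            (if i = 0 then (1 / (N + 1)) ^ 2 else (1 / (N + 1) - 1 / N) ^ 2) := by
          intro i
          rw [Real.dist_eq, sq_abs, hb i, hx₀app]
          split <;> push_cast <;> ring
        rw [Finset.sum_congr rfl fun i _ => this i, Fin.sum_univ_succ]
        simp only [if_pos rfl, Fin.succ_ne_zero, if_neg, Finset.sum_const,
          Finset.card_univ, Fintype.card_fin, nsmul_eq_mul, ↓reduceIte, ← hNdef]
        field_simp
        ring
  · -- lower bound
    rw [hd]
    refine le_of_not_gt fun hlt => ?_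
    rw [Metric.infDist_lt_iff ⟨x₀, hx₀mem⟩] at hlt
    obtain ⟨y, ⟨⟨hy0, hys⟩, i₀, hi₀⟩, hdy⟩ := hlt
    refine absurd hdy (not_lt.mpr ?_)
    rw [EuclideanSpace.dist_eq]
    apply Real.sqrt_le_sqrt
    set c : ℝ := 1 / (N + 1) with hcdef
    have key : ∀ i, dist (b i) (y i) ^ 2 = (y i - c) ^ 2 := by
      intro i
      rw [Real.dist_eq, sq_abs, hb i]
      push_cast
      ring
    rw [Finset.sum_congr rfl fun i _ => key i]
    rw [← Finset.sum_erase_add _ _ (Finset.mem_univ i₀)]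
    have hcard : (Finset.univ.erase i₀).card = n := by
      rw [Finset.card_erase_of_mem (Finset.mem_univ i₀)]
      simp
    have hsum : ∑ i ∈ Finset.univ.erase i₀, (y i - c) = c := by
      rw [Finset.sum_sub_distrib, Finset.sum_const, hcard, nsmul_eq_mul]
      have : ∑ i ∈ Finset.univ.erase i₀, y i = 1 := by
        have := Finset.sum_erase_add Finset.univ y (Finset.mem_univ i₀)
        rw [hys, hi₀, add_zero] at this
        exact this
      rw [this, hcdef, ← hNdef]
      field_simp
      ring
    have hCS : c ^ 2 ≤ N * ∑ i ∈ Finset.univ.erase i₀, (y i - c) ^ 2 := by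
      have := sq_sum_le_card_mul_sum_sq (s := Finset.univ.erase i₀) (f := fun i => y i - c)
      rwa [hsum, hcard] at this
    have h2 : (y i₀ - c) ^ 2 = c ^ 2 := by rw [hi₀]; ring
    rw [h2]
    have hc2 : 1 / (N * (N + 1)) = c ^ 2 / N + c ^ 2 := by
      rw [hcdef]; field_simp; ring
    rw [hc2]
    have : c ^ 2 / N ≤ ∑ i ∈ Finset.univ.erase i₀, (y i - c) ^ 2 := by
      rw [div_le_iff₀ hN]
      linarith [hCS]
    linarith
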